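/- Let (C,∂) be a finitely generated free chain complex over R = F₂[U,V,U⁻¹,V⁻¹] with basis B. Then the formal derivative Φ_B of ∂ with respect to U is a chain map: Φ_B ∘ ∂ + ∂ ∘ Φ_B = 0. -/

import Mathlib

open Finsupp

noncomputable section

abbrev F2 : Type := ZMod 2

/-- The Laurent polynomial ring `F₂[U,V,U⁻¹,V⁻¹]`, realized as the monoid algebra
of `ℤ × ℤ` over `F₂`; `U` corresponds to `(1,0)` and `V` to `(0,1)`. -/
abbrev R2 : Type := AddMonoidAlgebra F2 (ℤ × ℤ)

/-- Formal derivative of a Laurent polynomial with respect to `U`. -/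
def dU (f : R2) : R2 :=
  Finsupp.sum f.coeff fun mn c => AddMonoidAlgebra.single (mn.1 - 1, mn.2) ((mn.1 : F2) * c)

/-- Formal derivative of a Laurent polynomial with respect to `V`. -/
def dV (f : R2) : R2 :=
  Finsupp.sum f.coeff fun mn c => AddMonoidAlgebra.single (mn.1, mn.2 - 1) ((mn.2 : F2) * c)

/-- The `R2`-linear map `(B →₀ R2) →ₗ (B' →₀ R2)` determined by its values on
the standard basis. -/
def bmap {B B' : Type} (v : B → (B' →₀ R2)) : (B →₀ R2) →ₗ[R2] (B' →₀ R2) :=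
  Finsupp.lsum R2 fun x => LinearMap.toSpanSingleton R2 _ (v x)

/-- The matrix entry `P_{x y}` of a linear map with respect to the standard bases. -/
def matOf {B B' : Type} (f : (B →₀ R2) →ₗ[R2] (B' →₀ R2)) (x : B) (y : B') : R2 :=
  f (Finsupp.single x 1) y

/-- Apply `g : R2 → R2` to each matrix entry of `f`. -/
def entrywise {B B' : Type} [Finite B'] (g : R2 → R2)
    (f : (B →₀ R2) →ₗ[R2] (B' →₀ R2)) : (B →₀ R2) →ₗ[R2] (B' →₀ R2) :=
  bmap fun x => Finsupp.equivFunOnFinite.symm fun y => g (matOf f x y)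

/-- `Φ_B`, the formal derivative of the differential with respect to `U`. -/
def PhiB {B : Type} [Finite B] (d : (B →₀ R2) →ₗ[R2] (B →₀ R2)) :
    (B →₀ R2) →ₗ[R2] (B →₀ R2) :=
  entrywise dU d

/-- `Ψ_B`, the formal derivative of the differential with respect to `V`. -/
def PsiB {B : Type} [Finite B] (d : (B →₀ R2) →ₗ[R2] (B →₀ R2)) :
    (B →₀ R2) →ₗ[R2] (B →₀ R2) :=
  entrywise dV d


lemma dU_zero : dU 0 = 0 := by
  unfold dU; rw [AddMonoidAlgebra.coeff_zero]; exact Finsupp.sum_zero_index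

lemma dU_add (f g : R2) : dU (f + g) = dU f + dU g :=
  by unfold dU; rw [AddMonoidAlgebra.coeff_add]
     exact Finsupp.sum_add_index (by simp) (by intros; rw [mul_add, AddMonoidAlgebra.single_add])

lemma dU_add' (f g : R2) : dU (f + g) = dU f + dU g := dU_add f g

lemma dU_single (a : ℤ × ℤ) (c : F2) :
    dU (AddMonoidAlgebra.single a c) = AddMonoidAlgebra.single (a.1 - 1, a.2) ((a.1 : F2) * c) := by
  unfold dU; rw [AddMonoidAlgebra.coeff_single]; exact Finsupp.sum_single_index (by simp)

lemma sms (a b : ℤ × ℤ) (c e : F2) (f g : R2)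
    (hf : f = AddMonoidAlgebra.single a c) (hg : g = AddMonoidAlgebra.single b e) :
    f • g = AddMonoidAlgebra.single (a + b) (c * e) := by
  subst hf hg
  have h : (AddMonoidAlgebra.single a c : R2) * AddMonoidAlgebra.single b e
      = AddMonoidAlgebra.single (a + b) (c * e) := AddMonoidAlgebra.single_mul_single ..
  exact h

lemma dU_mul (f g : R2) : dU (f • g) = dU f • g + f • dU g := by
  induction f using AddMonoidAlgebra.induction_linear with
  | zero => simp [dU_zero]
  | add f₁ f₂ h₁ h₂ =>
      rw [add_smul, dU_add, h₁, h₂, dU_add, add_smul, add_smul]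
      abel
  | single a c =>
      induction g using AddMonoidAlgebra.induction_linear with
      | zero => simp [dU_zero]
      | add g₁ g₂ h₁ h₂ =>
          simp only [smul_add, dU_add, dU_add', h₁, h₂]
          abel
      | single b e =>
          rw [sms a b c e _ _ rfl rfl, dU_single, dU_single, dU_single,
            sms ((a.1 - 1, a.2)) b ((a.1 : F2) * c) e _ _ rfl rfl,
            sms a ((b.1 - 1, b.2)) c ((b.1 : F2) * e) _ _ rfl rfl]
          have hidx : ((a.1 - 1, a.2) + b) = ((a + b).1 - 1, (a + b).2) := by
            simp [Prod.ext_iff]; ring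
          have hidx' : (a + (b.1 - 1, b.2)) = ((a + b).1 - 1, (a + b).2) := by
            simp [Prod.ext_iff]; ring
          rw [hidx, hidx', ← AddMonoidAlgebra.single_add]
          congr 1
          simp only [Prod.fst_add]
          push_cast
          ring

lemma apply_eq_sum {B : Type} [Fintype B] (f : (B →₀ R2) →ₗ[R2] (B →₀ R2))
    (w : B →₀ R2) (y : B) :
    f w y = ∑ z, w z • matOf f z y := by
  have hw : w = ∑ z, Finsupp.single z (w z) := by
    conv_lhs => rw [← Finsupp.sum_single w]
    exact Finsupp.sum_fintype _ _ (by simp)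
  conv_lhs => rw [hw, map_sum]
  rw [Finsupp.finset_sum_apply]
  refine Finset.sum_congr rfl fun z _ => ?_
  have h1 : Finsupp.single z (w z) = w z • Finsupp.single z (1 : R2) := by
    rw [Finsupp.smul_single', mul_one]
  rw [h1, map_smul, Finsupp.smul_apply]
  rfl

lemma matOf_ent {B : Type} [Fintype B] (g : R2 → R2)
    (f : (B →₀ R2) →ₗ[R2] (B →₀ R2)) (x y : B) :
    matOf (entrywise g f) x y = g (matOf f x y) := by
  simp [matOf, entrywise, bmap, LinearMap.toSpanSingleton_apply]

def dUhom : R2 →+ R2 := { toFun := dU, map_zero' := dU_zero, map_add' := dU_add }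

/-- the formal derivative `Φ_B` of the differential is a chain map:
`Φ_B ∘ ∂ + ∂ ∘ Φ_B = 0`. -/
theorem stmt1 {B : Type} [Fintype B]
    (d : (B →₀ R2) →ₗ[R2] (B →₀ R2)) (hd : d ∘ₗ d = 0) :
    PhiB d ∘ₗ d + d ∘ₗ PhiB d = 0 := by
  have key : ∀ x y : B,
      (PhiB d) (d (Finsupp.single x 1)) y + d ((PhiB d) (Finsupp.single x 1)) y = 0 := by
    intro x y
    have h1 : (PhiB d) (d (Finsupp.single x 1)) y
        = ∑ z, matOf d x z • dU (matOf d z y) := by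
      rw [apply_eq_sum]
      refine Finset.sum_congr rfl fun z _ => ?_
      rw [show matOf (PhiB d) z y = dU (matOf d z y) from matOf_ent dU d z y]
      rfl
    have h2 : d ((PhiB d) (Finsupp.single x 1)) y
        = ∑ z, dU (matOf d x z) • matOf d z y := by
      rw [apply_eq_sum]
      refine Finset.sum_congr rfl fun z _ => ?_
      rw [show (PhiB d) (Finsupp.single x 1) z = dU (matOf d x z) from matOf_ent dU d x z]
    have h3 : ∀ z : B, matOf d x z • dU (matOf d z y) + dU (matOf d x z) • matOf d z y
        = dU (matOf d x z • matOf d z y) := by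
      intro z
      rw [dU_mul]
      exact add_comm _ _
    have h4 : d (d (Finsupp.single x 1)) y = ∑ z, matOf d x z • matOf d z y := by
      rw [apply_eq_sum]
      refine Finset.sum_congr rfl fun z _ => rfl
    have h5 : d (d (Finsupp.single x 1)) y = 0 := by
      rw [← LinearMap.comp_apply, hd]
      simp
    calc (PhiB d) (d (Finsupp.single x 1)) y + d ((PhiB d) (Finsupp.single x 1)) y
        = ∑ z, (matOf d x z • dU (matOf d z y) + dU (matOf d x z) • matOf d z y) := by
          rw [h1, h2, Finset.sum_add_distrib]
      _ = ∑ z, dU (matOf d x z • matOf d z y) := Finset.sum_congr rfl fun z _ => h3 z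
      _ = dU (∑ z, matOf d x z • matOf d z y) := (map_sum dUhom _ _).symm
      _ = dU (d (d (Finsupp.single x 1)) y) := by rw [h4]
      _ = 0 := by rw [h5]; exact dU_zero
  apply Finsupp.lhom_ext'
  intro x
  apply LinearMap.ext_ring
  refine DFunLike.ext _ _ fun y => ?_
  simp only [LinearMap.comp_apply, Finsupp.lsingle_apply, LinearMap.add_apply,
    Finsupp.add_apply, LinearMap.zero_apply, Finsupp.coe_zero, Pi.zero_apply]
  exact key x y

end
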